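/- For every n ≥ 1, χ'_st(K_{n,n}) − n ≤ χ'_st(K_n), where K_{n,n} is the complete bipartite graph with both parts of size n and K_n is the complete graph on n vertices. -/
import Mathlib

open SimpleGraph

/-- A star edge-coloring with `k` colors: a proper edge-coloring (adjacent edges get distinct
colors) such that no path with four edges and no cycle with four edges is bichromatic. -/
def IsStarEdgeColoring {V : Type*} (G : SimpleGraph V) {k : ℕ} (C : Sym2 V → Fin k) : Prop :=
  (∀ e₁ ∈ G.edgeSet, ∀ e₂ ∈ G.edgeSet, e₁ ≠ e₂ → (∃ v, v ∈ e₁ ∧ v ∈ e₂) → C e₁ ≠ C e₂) ∧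
  (∀ (u v : V) (w : G.Walk u v), w.length = 4 → w.IsPath →
    ¬ ∃ a b : Fin k, ∀ e ∈ w.edges, C e = a ∨ C e = b) ∧
  (∀ (u : V) (w : G.Walk u u), w.length = 4 → w.IsCycle →
    ¬ ∃ a b : Fin k, ∀ e ∈ w.edges, C e = a ∨ C e = b)

/-- The star chromatic index: the least `k` admitting a star edge-coloring with `k` colors. -/
noncomputable def starChromaticIndex {V : Type*} (G : SimpleGraph V) : ℕ :=
  sInf {k | ∃ C : Sym2 V → Fin k, IsStarEdgeColoring G C}

lemma walk_len4 {V : Type*} {G : SimpleGraph V} {u v : V} (w : G.Walk u v) (h : w.length = 4) :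
    ∃ (x1 x2 x3 : V) (h1 : G.Adj u x1) (h2 : G.Adj x1 x2) (h3 : G.Adj x2 x3) (h4 : G.Adj x3 v),
      w = .cons h1 (.cons h2 (.cons h3 (.cons h4 .nil))) := by
  cases w with
  | nil => simp at h
  | cons h1 w => cases w with
    | nil => simp at h
    | cons h2 w => cases w with
      | nil => simp at h
      | cons h3 w => cases w with
        | nil => simp at h
        | cons h4 w => cases w with
          | nil => exact ⟨_,_,_,h1,h2,h3,h4,rfl⟩
          | cons h5 w => simp [SimpleGraph.Walk.length_cons] at h

lemma pigeon3 {k : ℕ} {a b x y z : Fin k} (hx : x = a ∨ x = b) (hy : y = a ∨ y = b)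
    (hz : z = a ∨ z = b) : x = y ∨ x = z ∨ y = z := by
  rcases hx with h|h <;> rcases hy with h'|h' <;> rcases hz with h''|h'' <;> simp_all

lemma exists_star (V : Type*) [Fintype V] [DecidableEq V] (G : SimpleGraph V) :
    ∃ (k : ℕ) (C : Sym2 V → Fin k), IsStarEdgeColoring G C := by
  classical
  refine ⟨Fintype.card (Sym2 V), Fintype.equivFin (Sym2 V), ?_, ?_, ?_⟩
  · intro e₁ _ e₂ _ hne _
    exact fun hc => hne ((Fintype.equivFin (Sym2 V)).injective hc)
  · intro u v w hlen hp
    rintro ⟨a, b, hab⟩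
    obtain ⟨x1,x2,x3,h1,h2,h3,h4,rfl⟩ := walk_len4 w hlen
    have hnd := hp.edges_nodup
    simp only [SimpleGraph.Walk.edges_cons, SimpleGraph.Walk.edges_nil, List.nodup_cons,
      List.mem_cons, List.mem_singleton, List.not_mem_nil, or_false, List.nodup_nil,
      and_true, not_or] at hnd
    obtain ⟨⟨n1,n2,-⟩,⟨n3,-⟩,-⟩ := hnd
    have inj := (Fintype.equivFin (Sym2 V)).injective
    have c1 := hab s(u,x1) (by simp)
    have c2 := hab s(x1,x2) (by simp)
    have c3 := hab s(x2,x3) (by simp)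
    rcases pigeon3 c1 c2 c3 with h|h|h
    exacts [n1 (inj h), n2 (inj h), n3 (inj h)]
  · intro u w hlen hc
    rintro ⟨a, b, hab⟩
    obtain ⟨x1,x2,x3,h1,h2,h3,h4,rfl⟩ := walk_len4 w hlen
    have hnd := hc.isTrail.edges_nodup
    simp only [SimpleGraph.Walk.edges_cons, SimpleGraph.Walk.edges_nil, List.nodup_cons,
      List.mem_cons, List.mem_singleton, List.not_mem_nil, or_false, List.nodup_nil,
      and_true, not_or] at hnd
    obtain ⟨⟨n1,n2,-⟩,⟨n3,-⟩,-⟩ := hnd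
    have inj := (Fintype.equivFin (Sym2 V)).injective
    have c1 := hab s(u,x1) (by simp)
    have c2 := hab s(x1,x2) (by simp)
    have c3 := hab s(x2,x3) (by simp)
    rcases pigeon3 c1 c2 c3 with h|h|h
    exacts [n1 (inj h), n2 (inj h), n3 (inj h)]


section Construction

variable {n k : ℕ}

lemma cast_ne_nat (c : Fin k) (i : Fin n) :
    (Fin.castAdd n c : Fin (k + n)) ≠ Fin.natAdd k i := by
  intro h
  have h' := congrArg Fin.val h
  simp only [Fin.coe_castAdd, Fin.coe_natAdd] at h'
  have := c.isLt
  omega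

def mixFun (n k : ℕ) (hn : 1 ≤ n) (C : Sym2 (Fin n) → Fin k) :
    Fin n ⊕ Fin n → Fin n ⊕ Fin n → Fin (k + n)
  | Sum.inl i, Sum.inr j => if i = j then Fin.natAdd k i else Fin.castAdd n (C s(i, j))
  | Sum.inr j, Sum.inl i => if i = j then Fin.natAdd k i else Fin.castAdd n (C s(i, j))
  | _, _ => ⟨0, by omega⟩

def mix (n k : ℕ) (hn : 1 ≤ n) (C : Sym2 (Fin n) → Fin k) :
    Sym2 (Fin n ⊕ Fin n) → Fin (k + n) :=
  Sym2.lift ⟨mixFun n k hn C, by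
    intro x y
    rcases x with i|i <;> rcases y with j|j <;> rfl⟩

@[simp] lemma mix_eval (hn : 1 ≤ n) (C : Sym2 (Fin n) → Fin k) (i j : Fin n) :
    mix n k hn C s(Sum.inl i, Sum.inr j)
      = if i = j then Fin.natAdd k i else Fin.castAdd n (C s(i, j)) := rfl

@[simp] lemma mix_eval' (hn : 1 ≤ n) (C : Sym2 (Fin n) → Fin k) (i j : Fin n) :
    mix n k hn C s(Sum.inr j, Sum.inl i)
      = if i = j then Fin.natAdd k i else Fin.castAdd n (C s(i, j)) := rfl

lemma nonmatch (C : Sym2 (Fin n) → Fin k) {p q p' q' : Fin n} (hp : p ≠ p')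
    (h : (if p = q then Fin.natAdd k p else Fin.castAdd n (C s(p, q)))
       = (if p' = q' then Fin.natAdd k p' else Fin.castAdd n (C s(p', q')))) :
    p ≠ q ∧ p' ≠ q' := by
  by_cases h1 : p = q <;> by_cases h2 : p' = q'
  · rw [if_pos h1, if_pos h2] at h
    exact absurd (by simpa [Fin.ext_iff] using h) hp
  · rw [if_pos h1, if_neg h2] at h
    exact absurd h.symm (cast_ne_nat _ _)
  · rw [if_neg h1, if_pos h2] at h
    exact absurd h (cast_ne_nat _ _)
  · exact ⟨h1, h2⟩

lemma alt4 {a b w x y z : Fin k} (hw : w = a ∨ w = b) (hx : x = a ∨ x = b)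
    (hy : y = a ∨ y = b) (hz : z = a ∨ z = b)
    (d1 : w ≠ x) (d2 : x ≠ y) (d3 : y ≠ z) : w = y ∧ x = z := by
  rcases hw with h|h <;> rcases hx with h2|h2 <;> rcases hy with h3|h3 <;>
    rcases hz with h4|h4 <;> simp_all

/-- shared key step: a bichromatic configuration of 4 edges in `K_n` coming from
a path in `K_{n,n}` leads to a contradiction. -/
lemma key_path (C : Sym2 (Fin n) → Fin k)
    (hC : IsStarEdgeColoring (completeGraph (Fin n)) C)
    (i1 j1 i2 j2 i3 : Fin n)
    (h12 : i1 ≠ i2) (h13 : i1 ≠ i3) (h23 : i2 ≠ i3) (hj : j1 ≠ j2)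
    (e1 : i1 ≠ j1) (e2 : i2 ≠ j1) (e3 : i2 ≠ j2) (e4 : i3 ≠ j2)
    (h13c : C s(i1, j1) = C s(i2, j2)) (h24c : C s(j1, i2) = C s(j2, i3))
    (h12c : C s(i1, j1) ≠ C s(j1, i2)) : False := by
  by_cases hA : i1 = j2 <;> by_cases hB : i3 = j1
  · subst hA; subst hB
    exact h12c (h24c.symm.trans (by rw [Sym2.eq_swap]))
  · -- i1 = j2 : edges s(i1,j1) and s(i2,j2)=s(i2,i1) share i1 and are distinct
    subst hA
    refine hC.1 s(i1, j1) (by simpa using e1) s(i2, i1) (by simpa using e3) ?_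
      ⟨i1, by simp⟩ h13c
    rw [ne_eq, Sym2.eq_iff]
    rintro (⟨h, h'⟩|⟨h, h'⟩)
    · exact h12 h
    · exact e2 h'.symm
  · -- i3 = j1 : edges s(j1,i2)=s(i3,i2) and s(j2,i3) share i3 and are distinct
    subst hB
    have hm1 : s(i3, i2) ∈ (completeGraph (Fin n)).edgeSet := by
      simp only [SimpleGraph.mem_edgeSet, completeGraph_eq_top, SimpleGraph.top_adj]
      exact fun h => e2 h.symm
    have hm2 : s(j2, i3) ∈ (completeGraph (Fin n)).edgeSet := by
      simp only [SimpleGraph.mem_edgeSet, completeGraph_eq_top, SimpleGraph.top_adj]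
      exact fun h => e4 h.symm
    refine hC.1 s(i3, i2) hm1 s(j2, i3) hm2 ?_ ⟨i3, by simp⟩ ?_
    · rw [ne_eq, Sym2.eq_iff]
      rintro (⟨h, h'⟩|⟨h, h'⟩)
      · exact e4 h
      · exact e3 h'
    · first
      | exact h24c
      | exact (congrArg C Sym2.eq_swap).trans h24c
      | exact ((congrArg C Sym2.eq_swap).trans h24c).symm
  · -- generic case: a genuine bichromatic path of length 4 in K_n
    have a1 : (completeGraph (Fin n)).Adj i1 j1 := e1
    have a2 : (completeGraph (Fin n)).Adj j1 i2 := Ne.symm e2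
    have a3 : (completeGraph (Fin n)).Adj i2 j2 := e3
    have a4 : (completeGraph (Fin n)).Adj j2 i3 := Ne.symm e4
    refine hC.2.1 i1 i3 (.cons a1 (.cons a2 (.cons a3 (.cons a4 .nil)))) rfl ?_ ?_
    · have hA' : j2 ≠ i1 := fun h => hA h.symm
      have hB' : j1 ≠ i3 := fun h => hB h.symm
      rw [SimpleGraph.Walk.isPath_def]
      simp only [SimpleGraph.Walk.support_cons, SimpleGraph.Walk.support_nil]
      simp [List.nodup_cons, e1, Ne.symm e2, e3, Ne.symm e4, h12, h13, h23, hj, hA, hB,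
        hA', hB', Ne.symm h12, Ne.symm h13, Ne.symm h23, Ne.symm hj]
    · refine ⟨C s(i1, j1), C s(j1, i2), ?_⟩
      intro e he
      simp only [SimpleGraph.Walk.edges_cons, SimpleGraph.Walk.edges_nil,
        List.mem_cons, List.not_mem_nil, or_false] at he
      rcases he with rfl|rfl|rfl|rfl
      · exact Or.inl rfl
      · exact Or.inr rfl
      · exact Or.inl h13c.symm
      · exact Or.inr h24c.symm

lemma key_cycle (C : Sym2 (Fin n) → Fin k)
    (hC : IsStarEdgeColoring (completeGraph (Fin n)) C)
    (i1 j1 i2 j2 : Fin n)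
    (hi : i1 ≠ i2) (hj : j1 ≠ j2)
    (e1 : i1 ≠ j1) (e2 : i2 ≠ j1) (e3 : i2 ≠ j2) (e4 : i1 ≠ j2)
    (h13c : C s(i1, j1) = C s(i2, j2)) (h24c : C s(j1, i2) = C s(j2, i1))
    (h12c : C s(i1, j1) ≠ C s(j1, i2)) : False := by
  have a1 : (completeGraph (Fin n)).Adj i1 j1 := e1
  have a2 : (completeGraph (Fin n)).Adj j1 i2 := Ne.symm e2
  have a3 : (completeGraph (Fin n)).Adj i2 j2 := e3
  have a4 : (completeGraph (Fin n)).Adj j2 i1 := Ne.symm e4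
  refine hC.2.2 i1 (.cons a1 (.cons a2 (.cons a3 (.cons a4 .nil)))) rfl ?_ ?_
  · rw [SimpleGraph.Walk.isCycle_def]
    refine ⟨⟨?_⟩, by simp, ?_⟩
    · simp only [SimpleGraph.Walk.edges_cons, SimpleGraph.Walk.edges_nil]
      simp [List.nodup_cons, Sym2.eq_iff, e1, e2, e3, e4, hi, hj,
        Ne.symm e1, Ne.symm e2, Ne.symm e3, Ne.symm e4, Ne.symm hi, Ne.symm hj]
    · simp only [SimpleGraph.Walk.support_cons, SimpleGraph.Walk.support_nil]
      simp [List.nodup_cons, e1, e2, e3, e4, hi, hj,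
        Ne.symm e1, Ne.symm e2, Ne.symm e3, Ne.symm e4, Ne.symm hi, Ne.symm hj]
  · refine ⟨C s(i1, j1), C s(j1, i2), ?_⟩
    intro e he
    simp only [SimpleGraph.Walk.edges_cons, SimpleGraph.Walk.edges_nil,
      List.mem_cons, List.not_mem_nil, or_false] at he
    rcases he with rfl|rfl|rfl|rfl
    · exact Or.inl rfl
    · exact Or.inr rfl
    · exact Or.inl h13c.symm
    · exact Or.inr h24c.symm


lemma edge_form {n : ℕ} (e : Sym2 (Fin n ⊕ Fin n))
    (he : e ∈ (completeBipartiteGraph (Fin n) (Fin n)).edgeSet) :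
    ∃ i j, e = s(Sum.inl i, Sum.inr j) := by
  induction e using Sym2.ind with
  | _ x y =>
    rcases x with i|i <;> rcases y with j|j
    · simp at he
    · exact ⟨i, j, rfl⟩
    · exact ⟨j, i, Sym2.eq_swap⟩
    · simp at he

lemma edge_ne1 {n : ℕ} {i1 j1 i2 : Fin n} (h : i1 ≠ i2) :
    s(Sum.inl i1, Sum.inr j1) ≠ s(Sum.inr j1, Sum.inl i2) := by
  simp [Sym2.eq_iff, h]

lemma edge_ne2 {n : ℕ} {j1 i2 j2 : Fin n} (h : j1 ≠ j2) :
    s(Sum.inr j1, Sum.inl i2) ≠ s(Sum.inl i2, Sum.inr j2) := by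
  simp [Sym2.eq_iff, h]

lemma mix_proper (hn : 1 ≤ n) (C : Sym2 (Fin n) → Fin k)
    (hC : IsStarEdgeColoring (completeGraph (Fin n)) C) :
    ∀ e₁ ∈ (completeBipartiteGraph (Fin n) (Fin n)).edgeSet,
      ∀ e₂ ∈ (completeBipartiteGraph (Fin n) (Fin n)).edgeSet,
        e₁ ≠ e₂ → (∃ v, v ∈ e₁ ∧ v ∈ e₂) → mix n k hn C e₁ ≠ mix n k hn C e₂ := by
  intro e₁ h₁ e₂ h₂ hne hsh
  obtain ⟨i1, j1, rfl⟩ := edge_form e₁ h₁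
  obtain ⟨i2, j2, rfl⟩ := edge_form e₂ h₂
  obtain ⟨v, hv1, hv2⟩ := hsh
  rw [Sym2.mem_iff] at hv1 hv2
  simp only [mix_eval]
  have hcase : i1 = i2 ∨ j1 = j2 := by
    rcases hv1 with rfl|rfl <;> rcases hv2 with h|h
    · exact Or.inl (Sum.inl.inj h)
    · exact absurd h (by simp)
    · exact absurd h (by simp)
    · exact Or.inr (Sum.inr.inj h)
  rcases hcase with rfl|rfl
  · have hj : j1 ≠ j2 := fun h => hne (by rw [h])
    by_cases m1 : i1 = j1 <;> by_cases m2 : i1 = j2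
    · exact absurd (m1.symm.trans m2) hj
    · rw [if_pos m1, if_neg m2]; exact (cast_ne_nat _ _).symm
    · rw [if_neg m1, if_pos m2]; exact cast_ne_nat _ _
    · rw [if_neg m1, if_neg m2]
      intro h
      rw [Fin.castAdd_inj] at h
      refine hC.1 s(i1, j1) (by simpa using m1) s(i1, j2) (by simpa using m2) ?_
        ⟨i1, by simp⟩ h
      rw [ne_eq, Sym2.eq_iff]
      rintro (⟨-, h'⟩|⟨h', -⟩)
      · exact hj h'
      · exact m2 h'
  · have hi : i1 ≠ i2 := fun h => hne (by rw [h])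
    by_cases m1 : i1 = j1 <;> by_cases m2 : i2 = j1
    · exact absurd (m1.trans m2.symm) hi
    · rw [if_pos m1, if_neg m2]; exact (cast_ne_nat _ _).symm
    · rw [if_neg m1, if_pos m2]; exact cast_ne_nat _ _
    · rw [if_neg m1, if_neg m2]
      intro h
      rw [Fin.castAdd_inj] at h
      refine hC.1 s(i1, j1) (by simpa using m1) s(i2, j1) (by simpa using m2) ?_
        ⟨j1, by simp⟩ h
      rw [ne_eq, Sym2.eq_iff]
      rintro (⟨h', -⟩|⟨h', -⟩)
      · exact hi h'
      · exact m1 h'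


lemma mix_path (hn : 1 ≤ n) (C : Sym2 (Fin n) → Fin k)
    (hC : IsStarEdgeColoring (completeGraph (Fin n)) C) :
    ∀ (u v : Fin n ⊕ Fin n) (w : (completeBipartiteGraph (Fin n) (Fin n)).Walk u v),
      w.length = 4 → w.IsPath →
      ¬ ∃ a b : Fin (k + n), ∀ e ∈ w.edges, mix n k hn C e = a ∨ mix n k hn C e = b := by
  intro u v w hlen hp
  rintro ⟨a, b, hab⟩
  obtain ⟨x1, x2, x3, h1, h2, h3, h4, rfl⟩ := walk_len4 w hlen
  have hs := hp.support_nodup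
  rcases u with i1|a1 <;> rcases x1 with b1|j1 <;> rcases x2 with i2|a2 <;>
    rcases x3 with b2|j2 <;> rcases v with i3|a3 <;> simp at h1 h2 h3 h4
  · -- left-starting path : inl i1, inr j1, inl i2, inr j2, inl i3
    simp only [SimpleGraph.Walk.support_cons, SimpleGraph.Walk.support_nil] at hs
    simp at hs
    obtain ⟨⟨hi12, hi13⟩, hj12, hi23⟩ := hs
    have c1 := hab s(Sum.inl i1, Sum.inr j1) (by simp)
    have c2 := hab s(Sum.inr j1, Sum.inl i2) (by simp)
    have c3 := hab s(Sum.inl i2, Sum.inr j2) (by simp)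
    have c4 := hab s(Sum.inr j2, Sum.inl i3) (by simp)
    have d12 := mix_proper hn C hC s(Sum.inl i1, Sum.inr j1) (by simp)
      s(Sum.inr j1, Sum.inl i2) (by simp) (edge_ne1 hi12) ⟨Sum.inr j1, by simp⟩
    have d23 := mix_proper hn C hC s(Sum.inr j1, Sum.inl i2) (by simp)
      s(Sum.inl i2, Sum.inr j2) (by simp) (edge_ne2 hj12) ⟨Sum.inl i2, by simp⟩
    have d34 := mix_proper hn C hC s(Sum.inl i2, Sum.inr j2) (by simp)
      s(Sum.inr j2, Sum.inl i3) (by simp) (edge_ne1 hi23) ⟨Sum.inr j2, by simp⟩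
    obtain ⟨q13, q24⟩ := alt4 c1 c2 c3 c4 d12 d23 d34
    simp only [mix_eval, mix_eval'] at q13 q24 d12
    obtain ⟨m1, m3⟩ := nonmatch C hi12 q13
    obtain ⟨m2, m4⟩ := nonmatch C hi23 q24
    rw [if_neg m1, if_neg m3, Fin.castAdd_inj] at q13
    rw [if_neg m2, if_neg m4, Fin.castAdd_inj] at q24
    rw [if_neg m1, if_neg m2] at d12
    have sw : ∀ x y : Fin n, C s(x, y) = C s(y, x) := fun x y => congrArg C Sym2.eq_swap
    exact key_path C hC i1 j1 i2 j2 i3 hi12 hi13 hi23 hj12 m1 m2 m3 m4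
      q13 ((sw j1 i2).trans (q24.trans (sw i3 j2)))
      (fun h => d12 (congrArg _ (h.trans (sw j1 i2))))
  · -- right-starting path : inr a1, inl b1, inr a2, inl b2, inr a3
    simp only [SimpleGraph.Walk.support_cons, SimpleGraph.Walk.support_nil] at hs
    simp at hs
    obtain ⟨⟨ha12, ha13⟩, hb12, ha23⟩ := hs
    have c1 := hab s(Sum.inr a1, Sum.inl b1) (by simp)
    have c2 := hab s(Sum.inl b1, Sum.inr a2) (by simp)
    have c3 := hab s(Sum.inr a2, Sum.inl b2) (by simp)
    have c4 := hab s(Sum.inl b2, Sum.inr a3) (by simp)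
    have d12 := mix_proper hn C hC s(Sum.inr a1, Sum.inl b1) (by simp)
      s(Sum.inl b1, Sum.inr a2) (by simp) (edge_ne2 ha12) ⟨Sum.inl b1, by simp⟩
    have d23 := mix_proper hn C hC s(Sum.inl b1, Sum.inr a2) (by simp)
      s(Sum.inr a2, Sum.inl b2) (by simp) (edge_ne1 hb12) ⟨Sum.inr a2, by simp⟩
    have d34 := mix_proper hn C hC s(Sum.inr a2, Sum.inl b2) (by simp)
      s(Sum.inl b2, Sum.inr a3) (by simp) (edge_ne2 ha23) ⟨Sum.inl b2, by simp⟩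
    obtain ⟨q13, q24⟩ := alt4 c1 c2 c3 c4 d12 d23 d34
    simp only [mix_eval, mix_eval'] at q13 q24 d12
    obtain ⟨m1, m3⟩ := nonmatch C hb12 q13
    obtain ⟨m2, m4⟩ := nonmatch C hb12 q24
    rw [if_neg m1, if_neg m3, Fin.castAdd_inj] at q13
    rw [if_neg m2, if_neg m4, Fin.castAdd_inj] at q24
    rw [if_neg m1, if_neg m2] at d12
    have sw : ∀ x y : Fin n, C s(x, y) = C s(y, x) := fun x y => congrArg C Sym2.eq_swap
    exact key_path C hC a1 b1 a2 b2 a3 ha12 ha13 ha23 hb12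
      (Ne.symm m1) (Ne.symm m2) (Ne.symm m3) (Ne.symm m4)
      ((sw a1 b1).trans (q13.trans (sw b2 a2)))
      q24
      (fun h => d12 (congrArg _ ((sw b1 a1).trans h)))


lemma mix_cycle (hn : 1 ≤ n) (C : Sym2 (Fin n) → Fin k)
    (hC : IsStarEdgeColoring (completeGraph (Fin n)) C) :
    ∀ (u : Fin n ⊕ Fin n) (w : (completeBipartiteGraph (Fin n) (Fin n)).Walk u u),
      w.length = 4 → w.IsCycle →
      ¬ ∃ a b : Fin (k + n), ∀ e ∈ w.edges, mix n k hn C e = a ∨ mix n k hn C e = b := by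
  intro u w hlen hc
  rintro ⟨a, b, hab⟩
  obtain ⟨x1, x2, x3, h1, h2, h3, h4, rfl⟩ := walk_len4 w hlen
  have hs := hc.support_nodup
  have sw : ∀ x y : Fin n, C s(x, y) = C s(y, x) := fun x y => congrArg C Sym2.eq_swap
  rcases u with i1|a1 <;> rcases x1 with b1|j1 <;> rcases x2 with i2|a2 <;>
    rcases x3 with b2|j2 <;> simp at h1 h2 h3 h4
  · -- inl i1, inr j1, inl i2, inr j2
    simp only [SimpleGraph.Walk.support_cons, SimpleGraph.Walk.support_nil] at hs
    simp at hs
    obtain ⟨hj12, hi21⟩ := hs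
    have hi12 : i1 ≠ i2 := Ne.symm hi21
    have c1 := hab s(Sum.inl i1, Sum.inr j1) (by simp)
    have c2 := hab s(Sum.inr j1, Sum.inl i2) (by simp)
    have c3 := hab s(Sum.inl i2, Sum.inr j2) (by simp)
    have c4 := hab s(Sum.inr j2, Sum.inl i1) (by simp)
    have d12 := mix_proper hn C hC s(Sum.inl i1, Sum.inr j1) (by simp)
      s(Sum.inr j1, Sum.inl i2) (by simp) (edge_ne1 hi12) ⟨Sum.inr j1, by simp⟩
    have d23 := mix_proper hn C hC s(Sum.inr j1, Sum.inl i2) (by simp)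
      s(Sum.inl i2, Sum.inr j2) (by simp) (edge_ne2 hj12) ⟨Sum.inl i2, by simp⟩
    have d34 := mix_proper hn C hC s(Sum.inl i2, Sum.inr j2) (by simp)
      s(Sum.inr j2, Sum.inl i1) (by simp) (edge_ne1 hi21) ⟨Sum.inr j2, by simp⟩
    obtain ⟨q13, q24⟩ := alt4 c1 c2 c3 c4 d12 d23 d34
    simp only [mix_eval, mix_eval'] at q13 q24 d12
    obtain ⟨m1, m3⟩ := nonmatch C hi12 q13
    obtain ⟨m2, m4⟩ := nonmatch C hi21 q24
    rw [if_neg m1, if_neg m3, Fin.castAdd_inj] at q13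
    rw [if_neg m2, if_neg m4, Fin.castAdd_inj] at q24
    rw [if_neg m1, if_neg m2] at d12
    exact key_cycle C hC i1 j1 i2 j2 hi12 hj12 m1 m2 m3 m4
      q13 ((sw j1 i2).trans (q24.trans (sw i1 j2)))
      (fun h => d12 (congrArg _ (h.trans (sw j1 i2))))
  · -- inr a1, inl b1, inr a2, inl b2
    simp only [SimpleGraph.Walk.support_cons, SimpleGraph.Walk.support_nil] at hs
    simp at hs
    obtain ⟨hb12, ha21⟩ := hs
    have ha12 : a1 ≠ a2 := Ne.symm ha21
    have c1 := hab s(Sum.inr a1, Sum.inl b1) (by simp)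
    have c2 := hab s(Sum.inl b1, Sum.inr a2) (by simp)
    have c3 := hab s(Sum.inr a2, Sum.inl b2) (by simp)
    have c4 := hab s(Sum.inl b2, Sum.inr a1) (by simp)
    have d12 := mix_proper hn C hC s(Sum.inr a1, Sum.inl b1) (by simp)
      s(Sum.inl b1, Sum.inr a2) (by simp) (edge_ne2 ha12) ⟨Sum.inl b1, by simp⟩
    have d23 := mix_proper hn C hC s(Sum.inl b1, Sum.inr a2) (by simp)
      s(Sum.inr a2, Sum.inl b2) (by simp) (edge_ne1 hb12) ⟨Sum.inr a2, by simp⟩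
    have d34 := mix_proper hn C hC s(Sum.inr a2, Sum.inl b2) (by simp)
      s(Sum.inl b2, Sum.inr a1) (by simp) (edge_ne2 ha21) ⟨Sum.inl b2, by simp⟩
    obtain ⟨q13, q24⟩ := alt4 c1 c2 c3 c4 d12 d23 d34
    simp only [mix_eval, mix_eval'] at q13 q24 d12
    obtain ⟨m1, m3⟩ := nonmatch C hb12 q13
    obtain ⟨m2, m4⟩ := nonmatch C hb12 q24
    rw [if_neg m1, if_neg m3, Fin.castAdd_inj] at q13
    rw [if_neg m2, if_neg m4, Fin.castAdd_inj] at q24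
    rw [if_neg m1, if_neg m2] at d12
    exact key_cycle C hC a1 b1 a2 b2 ha12 hb12
      (Ne.symm m1) (Ne.symm m2) (Ne.symm m3) (Ne.symm m4)
      ((sw a1 b1).trans (q13.trans (sw b2 a2)))
      q24
      (fun h => d12 (congrArg _ ((sw b1 a1).trans h)))

lemma mix_star (hn : 1 ≤ n) (C : Sym2 (Fin n) → Fin k)
    (hC : IsStarEdgeColoring (completeGraph (Fin n)) C) :
    IsStarEdgeColoring (completeBipartiteGraph (Fin n) (Fin n)) (mix n k hn C) :=
  ⟨mix_proper hn C hC, mix_path hn C hC, mix_cycle hn C hC⟩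

end Construction

theorem stmt_5 (n : ℕ) (hn : 1 ≤ n) :
    starChromaticIndex (completeBipartiteGraph (Fin n) (Fin n)) - n ≤
      starChromaticIndex (completeGraph (Fin n)) := by
  obtain ⟨k0, C0, hC0⟩ := exists_star (Fin n) (completeGraph (Fin n))
  have hne : {m | ∃ C : Sym2 (Fin n) → Fin m,
      IsStarEdgeColoring (completeGraph (Fin n)) C}.Nonempty := ⟨k0, C0, hC0⟩
  obtain ⟨C, hC⟩ : ∃ C : Sym2 (Fin n) → Fin (starChromaticIndex (completeGraph (Fin n))),
      IsStarEdgeColoring (completeGraph (Fin n)) C := Nat.sInf_mem hne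
  have hle : starChromaticIndex (completeBipartiteGraph (Fin n) (Fin n)) ≤
      starChromaticIndex (completeGraph (Fin n)) + n :=
    Nat.sInf_le ⟨mix n _ hn C, mix_star hn C hC⟩
  omega
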